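/- Fix integers k ≥ 1 and n > k. Then both inf over all m ≥ 1 and type distributions G over m types for n agents of sup_{J,ρ} innerLP^{OST(J,ρ)/Proph}_{k,n}(G), and the same infimum with innerLP^{OST(J,ρ)/ExAnte}_{k,n}(G) in place of innerLP^{OST(J,ρ)/Proph}_{k,n}(G), are equal to inf{α : there exist q_1, ..., q_{n-1} ∈ [0,1] such that α = P(Σ_{i=1}^{n-1} X_i < k) = E[min{Σ_{i=1}^{n-1} X_i, k}]/k, where X_1, ..., X_{n-1} are independent Bernoulli random variables with P(X_i = 1) = q_i}. -/

import Mathlib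

open Finset

/-- The polytope `P(k,n)` of state/acceptance probability vectors. -/
def memP (k n : ℕ) (x y : ℕ → ℕ → ℝ) : Prop :=
  x 1 k = 1 ∧
  (∀ l, 1 ≤ l → l < k → x 1 l = 0) ∧
  (∀ i ∈ Finset.Icc 2 n, ∀ l ∈ Finset.Icc 1 k,
    x i l = x (i-1) l - y (i-1) l + (if l < k then y (i-1) (l+1) else 0)) ∧
  (∀ i ∈ Finset.Icc 1 n, ∀ l ∈ Finset.Icc 1 k, 0 ≤ y i l ∧ y i l ≤ x i l)

/-- `G` is a valid family of type distributions over `m` types for `n` agents. -/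
def IsTypeDist (n m : ℕ) (G : ℕ → ℕ → ℝ) : Prop :=
  ∀ i ∈ Finset.Icc 1 n, G i 0 = 0 ∧ G i m = 1 ∧ ∀ j ∈ Finset.Icc 1 m, G i (j-1) ≤ G i j

/-- `E[min{X_1+...+X_t, k}]` for independent Bernoulli `X_i` with success probabilities `p i`. -/
noncomputable def eMinBer (p : ℕ → ℝ) (t k : ℕ) : ℝ :=
  ∑ S ∈ (Finset.Icc 1 t).powerset,
    (∏ i ∈ S, p i) * (∏ i ∈ Finset.Icc 1 t \ S, (1 - p i)) * min (S.card : ℝ) (k : ℝ)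

/-- `P(X_1+...+X_t < k)` for independent Bernoulli `X_i` with success probabilities `p i`. -/
noncomputable def probLt (p : ℕ → ℝ) (t k : ℕ) : ℝ :=
  ∑ S ∈ (Finset.Icc 1 t).powerset.filter (fun S => S.card < k),
    (∏ i ∈ S, p i) * ∏ i ∈ Finset.Icc 1 t \ S, (1 - p i)

noncomputable def QProph (k n : ℕ) (G : ℕ → ℕ → ℝ) (j : ℕ) : ℝ :=
  eMinBer (fun i => G i j) n k

noncomputable def QExAnte (k n : ℕ) (G : ℕ → ℕ → ℝ) (j : ℕ) : ℝ :=
  min (∑ i ∈ Finset.Icc 1 n, G i j) (k : ℝ)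

noncomputable def coverSum (k n : ℕ) (G : ℕ → ℕ → ℝ) (j : ℕ) (x y : ℕ → ℕ → ℝ) : ℝ :=
  ∑ i ∈ Finset.Icc 1 n, ∑ l ∈ Finset.Icc 1 k, min (y i l) (G i j * x i l)

/-- `τ_i(J,ρ)`. -/
noncomputable def tauOf (G : ℕ → ℕ → ℝ) (J : ℕ) (ρ : ℝ) (i : ℕ) : ℝ :=
  (1 - ρ) * G i (J-1) + ρ * G i J

/-- The simplified dual LP `innerLP^{OST(J,ρ)/·}_{k,n}(G)` with coefficients `Q`. -/
noncomputable def innerLP_OST (k n m : ℕ) (G : ℕ → ℕ → ℝ) (J : ℕ) (ρ : ℝ) (Q : ℕ → ℝ) : ℝ :=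
  sSup {θ : ℝ | ∃ x y, memP k n x y ∧
    (∀ i ∈ Finset.Icc 1 n, ∀ l ∈ Finset.Icc 1 k, y i l = tauOf G J ρ i * x i l) ∧
    ∀ j ∈ Finset.Icc 1 m, θ * Q j ≤ coverSum k n G j x y}

noncomputable def bw (p : ℕ → ℝ) (T S : Finset ℕ) : ℝ :=
  (∏ i ∈ S, p i) * ∏ i ∈ T \ S, (1 - p i)

noncomputable def SB (p : ℕ → ℝ) (T : Finset ℕ) (f : ℕ → ℝ) : ℝ :=
  ∑ S ∈ T.powerset, bw p T S * f S.card

lemma SB_empty (p : ℕ → ℝ) (f : ℕ → ℝ) : SB p ∅ f = f 0 := by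
  simp [SB, bw]

lemma SB_insert (p : ℕ → ℝ) (f : ℕ → ℝ) {a : ℕ} {T : Finset ℕ} (ha : a ∉ T) :
    SB p (insert a T) f = p a * SB p T (fun c => f (c+1)) + (1 - p a) * SB p T f := by
  unfold SB
  rw [Finset.sum_powerset_insert ha, Finset.mul_sum, Finset.mul_sum]
  conv_lhs => rw [add_comm]
  congr 1
  · apply Finset.sum_congr rfl
    intro S hS
    have hS' : S ⊆ T := Finset.mem_powerset.mp hS
    have haS : a ∉ S := fun h => ha (hS' h)
    have h1 : insert a T \ insert a S = T \ S := by
      ext x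
      simp only [Finset.mem_sdiff, Finset.mem_insert]
      constructor
      · rintro ⟨hx1 | hx1, hx2⟩
        · exact (hx2 (Or.inl hx1)).elim
        · exact ⟨hx1, fun h => hx2 (Or.inr h)⟩
      · rintro ⟨hx1, hx2⟩
        exact ⟨Or.inr hx1, fun h => h.elim (fun h' => ha (h' ▸ hx1)) hx2⟩
    rw [bw, bw, h1, Finset.prod_insert haS, Finset.card_insert_of_notMem haS]
    ring
  · apply Finset.sum_congr rfl
    intro S hS
    have hS' : S ⊆ T := Finset.mem_powerset.mp hS
    have haS : a ∉ S := fun h => ha (hS' h)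
    have h1 : insert a T \ S = insert a (T \ S) := by
      rw [Finset.insert_sdiff_of_notMem _ haS]
    have h2 : a ∉ T \ S := fun h => ha (Finset.mem_sdiff.mp h).1
    rw [bw, bw, h1, Finset.prod_insert h2]
    ring

lemma SB_congr {p : ℕ → ℝ} {T : Finset ℕ} {f g : ℕ → ℝ} (h : ∀ c, f c = g c) :
    SB p T f = SB p T g := by
  unfold SB; exact Finset.sum_congr rfl fun S _ => by rw [h]

lemma SB_const (p : ℕ → ℝ) (T : Finset ℕ) (c : ℝ) : SB p T (fun _ => c) = c := by
  induction T using Finset.induction_on with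
  | empty => simp [SB_empty]
  | @insert _ _ ha ih => rw [SB_insert _ _ ha]; rw [ih]; ring

lemma SB_add (p : ℕ → ℝ) (T : Finset ℕ) (f g : ℕ → ℝ) :
    SB p T (fun c => f c + g c) = SB p T f + SB p T g := by
  unfold SB; rw [← Finset.sum_add_distrib]; exact Finset.sum_congr rfl fun S _ => by ring

lemma SB_neg (p : ℕ → ℝ) (T : Finset ℕ) (f : ℕ → ℝ) :
    SB p T (fun c => -(f c)) = -SB p T f := by
  unfold SB; rw [← Finset.sum_neg_distrib]; exact Finset.sum_congr rfl fun S _ => by ring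

lemma bw_nonneg {p : ℕ → ℝ} {T S : Finset ℕ} (hp : ∀ i ∈ T, 0 ≤ p i ∧ p i ≤ 1)
    (hS : S ⊆ T) : 0 ≤ bw p T S := by
  unfold bw
  apply mul_nonneg
  · exact Finset.prod_nonneg fun i hi => (hp i (hS hi)).1
  · exact Finset.prod_nonneg fun i hi => by
      have := (hp i (Finset.mem_sdiff.mp hi).1).2; linarith

lemma SB_mono_f {p : ℕ → ℝ} {T : Finset ℕ} {f g : ℕ → ℝ}
    (hp : ∀ i ∈ T, 0 ≤ p i ∧ p i ≤ 1) (hfg : ∀ c, f c ≤ g c) :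
    SB p T f ≤ SB p T g := by
  apply Finset.sum_le_sum
  intro S hS
  exact mul_le_mul_of_nonneg_left (hfg _) (bw_nonneg hp (Finset.mem_powerset.mp hS))

lemma SB_nonneg {p : ℕ → ℝ} {T : Finset ℕ} {f : ℕ → ℝ}
    (hp : ∀ i ∈ T, 0 ≤ p i ∧ p i ≤ 1) (hf : ∀ c, 0 ≤ f c) : 0 ≤ SB p T f := by
  have := SB_mono_f (f := fun _ => (0:ℝ)) (g := f) hp hf
  rwa [SB_const] at this

lemma SB_le_const {p : ℕ → ℝ} {T : Finset ℕ} {f : ℕ → ℝ} {B : ℝ}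
    (hp : ∀ i ∈ T, 0 ≤ p i ∧ p i ≤ 1) (hf : ∀ c, f c ≤ B) : SB p T f ≤ B := by
  have := SB_mono_f (f := f) (g := fun _ => B) hp hf
  rwa [SB_const] at this

lemma SB_id (p : ℕ → ℝ) (T : Finset ℕ) :
    SB p T (fun c => (c:ℝ)) = ∑ i ∈ T, p i := by
  induction T using Finset.induction_on with
  | empty => simp [SB_empty]
  | @insert a T ha ih =>
    rw [SB_insert _ _ ha, Finset.sum_insert ha, ← ih]
    have : SB p T (fun c => ((c+1 : ℕ):ℝ)) = SB p T (fun c => (c:ℝ)) + 1 := by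
      rw [← SB_const p T 1, ← SB_add]
      apply SB_congr; intro c; push_cast; ring
    rw [this]; ring

lemma SB_mono_p :
    ∀ {T : Finset ℕ} {f p q : ℕ → ℝ}, (∀ c, f c ≤ f (c+1)) → (∀ i ∈ T, 0 ≤ p i ∧ p i ≤ 1) →
    (∀ i ∈ T, 0 ≤ q i ∧ q i ≤ 1) → (∀ i ∈ T, p i ≤ q i) →
    SB p T f ≤ SB q T f := by
  intro T
  induction T using Finset.induction_on with
  | empty => intro f p q _ _ _ _; rw [SB_empty, SB_empty]
  | @insert a T ha ih =>
    intro f p q hf hp hq hpq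
    have hpT : ∀ i ∈ T, 0 ≤ p i ∧ p i ≤ 1 := fun i hi => hp i (Finset.mem_insert_of_mem hi)
    have hqT : ∀ i ∈ T, 0 ≤ q i ∧ q i ≤ 1 := fun i hi => hq i (Finset.mem_insert_of_mem hi)
    have hpqT : ∀ i ∈ T, p i ≤ q i := fun i hi => hpq i (Finset.mem_insert_of_mem hi)
    have hpa := hp a (Finset.mem_insert_self a T)
    have hqa := hq a (Finset.mem_insert_self a T)
    have hpqa := hpq a (Finset.mem_insert_self a T)
    rw [SB_insert _ _ ha, SB_insert _ _ ha]
    have h1 : SB p T (fun c => f (c+1)) ≤ SB q T (fun c => f (c+1)) :=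
      ih (fun c => hf (c+1)) hpT hqT hpqT
    have h2 : SB p T f ≤ SB q T f := ih hf hpT hqT hpqT
    have h3 : SB q T f ≤ SB q T (fun c => f (c+1)) := SB_mono_f hqT hf
    nlinarith [h1, h2, h3, hpa.1, hpa.2, hqa.1, hqa.2, hpqa]

lemma SB_anti_p {T : Finset ℕ} {f p q : ℕ → ℝ} (hf : ∀ c, f (c+1) ≤ f c)
    (hp : ∀ i ∈ T, 0 ≤ p i ∧ p i ≤ 1) (hq : ∀ i ∈ T, 0 ≤ q i ∧ q i ≤ 1)
    (hpq : ∀ i ∈ T, p i ≤ q i) : SB q T f ≤ SB p T f := by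
  have := SB_mono_p (f := fun c => -(f c)) (fun c => neg_le_neg (hf c)) hp hq hpq
  rw [SB_neg, SB_neg] at this
  linarith

/-- adding independent elements decreases `SB` for antitone `f`. -/
lemma SB_subset_anti {T T' : Finset ℕ} {f p : ℕ → ℝ} (hf : ∀ c, f (c+1) ≤ f c)
    (hp : ∀ i ∈ T', 0 ≤ p i ∧ p i ≤ 1) (hsub : T ⊆ T') :
    SB p T' f ≤ SB p T f := by
  have key : ∀ (U : Finset ℕ), Disjoint T U → (∀ i ∈ T ∪ U, 0 ≤ p i ∧ p i ≤ 1) →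
      SB p (T ∪ U) f ≤ SB p T f := by
    intro U
    induction U using Finset.induction_on with
    | empty => intro _ _; rw [Finset.union_empty]
    | @insert a U ha ih =>
      intro hd hp'
      have hd' : Disjoint T U := hd.mono_right (Finset.subset_insert a U)
      have haTU : a ∉ T ∪ U := by
        rw [Finset.mem_union]
        rintro (h | h)
        · exact (Finset.disjoint_left.mp hd) h (Finset.mem_insert_self a U)
        · exact ha h
      have heq : T ∪ insert a U = insert a (T ∪ U) := by
        ext x; simp only [Finset.mem_union, Finset.mem_insert]; tauto
      have hpTU : ∀ i ∈ T ∪ U, 0 ≤ p i ∧ p i ≤ 1 := by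
        intro i hi; apply hp'; rw [heq]; exact Finset.mem_insert_of_mem hi
      have hpa : 0 ≤ p a ∧ p a ≤ 1 := by
        apply hp'; rw [heq]; exact Finset.mem_insert_self _ _
      rw [heq, SB_insert _ _ haTU]
      have h1 : SB p (T ∪ U) (fun c => f (c+1)) ≤ SB p (T ∪ U) f := SB_mono_f hpTU hf
      have h2 : SB p (T ∪ U) f ≤ SB p T f := ih hd' hpTU
      nlinarith [hpa.1, hpa.2]
  have := key (T' \ T) Finset.disjoint_sdiff (by rwa [Finset.union_sdiff_of_subset hsub])
  rwa [Finset.union_sdiff_of_subset hsub] at this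

lemma SB_zero_p {T : Finset ℕ} {f p : ℕ → ℝ} (hp : ∀ i ∈ T, p i = 0) :
    SB p T f = f 0 := by
  induction T using Finset.induction_on with
  | empty => exact SB_empty _ _
  | @insert a T ha ih =>
    rw [SB_insert _ _ ha, hp a (Finset.mem_insert_self a T),
      ih (fun i hi => hp i (Finset.mem_insert_of_mem hi))]
    ring

lemma SB_one_p : ∀ {T : Finset ℕ} {f p : ℕ → ℝ}, (∀ i ∈ T, p i = 1) →
    SB p T f = f T.card := by
  intro T
  induction T using Finset.induction_on with
  | empty => intro f p _; rw [SB_empty]; simp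
  | @insert a T ha ih =>
    intro f p hp
    rw [SB_insert _ _ ha, hp a (Finset.mem_insert_self a T),
      ih (fun i hi => hp i (Finset.mem_insert_of_mem hi)),
      Finset.card_insert_of_notMem ha]
    ring

lemma SB_continuous {P : ℝ → ℕ → ℝ} (hP : ∀ i, Continuous fun s => P s i)
    (T : Finset ℕ) (f : ℕ → ℝ) : Continuous fun s => SB (P s) T f := by
  unfold SB bw
  apply continuous_finset_sum
  intro S _
  exact ((continuous_finset_prod _ fun i _ => hP i).mul
    (continuous_finset_prod _ fun i _ => continuous_const.sub (hP i))).mul continuous_const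

lemma SB_finsum (p : ℕ → ℝ) (T : Finset ℕ) (A : Finset ℕ) (f : ℕ → ℕ → ℝ) :
    SB p T (fun c => ∑ l ∈ A, f l c) = ∑ l ∈ A, SB p T (f l) := by
  unfold SB
  rw [Finset.sum_comm]
  exact Finset.sum_congr rfl fun S _ => by rw [Finset.mul_sum]

/-- `min(c,k)` -/
noncomputable def fmin (k : ℕ) (c : ℕ) : ℝ := min (c:ℝ) (k:ℝ)
/-- indicator `c < k` -/
noncomputable def find (k : ℕ) (c : ℕ) : ℝ := if c < k then 1 else 0
/-- indicator `c + l = k` -/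
noncomputable def fdel (k l : ℕ) (c : ℕ) : ℝ := if c + l = k then 1 else 0

lemma fmin_succ (k c : ℕ) : fmin k (c+1) = fmin k c + find k c := by
  unfold fmin find
  by_cases h : c < k
  · rw [if_pos h]
    have h1 : (c:ℝ) ≤ k := by exact_mod_cast h.le
    have h2 : ((c+1:ℕ):ℝ) ≤ k := by exact_mod_cast h
    rw [min_eq_left h2, min_eq_left h1]; push_cast; ring
  · rw [if_neg h]
    have h1 : (k:ℝ) ≤ c := by exact_mod_cast Nat.le_of_not_lt h
    have h2 : (k:ℝ) ≤ ((c+1:ℕ):ℝ) := by push_cast; linarith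
    rw [min_eq_right h2, min_eq_right h1]; ring

lemma eMinBer_eq_SB (p : ℕ → ℝ) (t k : ℕ) :
    eMinBer p t k = SB p (Finset.Icc 1 t) (fmin k) := rfl

lemma probLt_eq_SB (p : ℕ → ℝ) (t k : ℕ) :
    probLt p t k = SB p (Finset.Icc 1 t) (find k) := by
  unfold probLt SB find bw
  rw [Finset.sum_filter]
  exact Finset.sum_congr rfl fun S _ => by by_cases h : S.card < k <;> simp [h]

/-- key identity: `E[min(A+Ber(pa),k)] = E[min(A,k)] + pa·P(A<k)` -/
lemma EM_insert (p : ℕ → ℝ) (k : ℕ) {a : ℕ} {T : Finset ℕ} (ha : a ∉ T) :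
    SB p (insert a T) (fmin k) = SB p T (fmin k) + p a * SB p T (find k) := by
  rw [SB_insert _ _ ha, SB_congr (fun c => fmin_succ k c), SB_add]
  ring

lemma Icc_one_succ (n : ℕ) : Finset.Icc 1 (n+1) = insert (n+1) (Finset.Icc 1 n) := by
  ext x; simp only [Finset.mem_Icc, Finset.mem_insert]; omega

/-- enumeration identity: `E[min(A_n,k)] = Σ_i p_i P(A_{i-1} < k)` -/
lemma EM_enum (p : ℕ → ℝ) (k : ℕ) (n : ℕ) :
    SB p (Finset.Icc 1 n) (fmin k) =
      ∑ i ∈ Finset.Icc 1 n, p i * SB p (Finset.Icc 1 (i-1)) (find k) := by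
  induction n with
  | zero => simp [SB_empty, fmin]
  | succ n ih =>
    have hnot : (n+1) ∉ Finset.Icc 1 n := by simp
    rw [Icc_one_succ, EM_insert p k hnot, Finset.sum_insert hnot, ih]
    simp only [Nat.add_sub_cancel]
    ring

lemma fdel_succ (k l c : ℕ) : fdel k l (c+1) = fdel k (l+1) c := by
  unfold fdel
  congr 1
  · simp only [eq_iff_iff]; omega

lemma fdel_sum (k : ℕ) (hk : 1 ≤ k) (c : ℕ) :
    ∑ l ∈ Finset.Icc 1 k, fdel k l c = find k c := by
  unfold fdel find
  by_cases hc : c < k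
  · rw [if_pos hc, Finset.sum_eq_single (k - c)]
    · rw [if_pos (by omega)]
    · intro l hl hne
      rw [if_neg]
      simp only [Finset.mem_Icc] at hl
      omega
    · intro h
      exfalso
      exact h (Finset.mem_Icc.mpr (by omega))
  · rw [if_neg hc]
    apply Finset.sum_eq_zero
    intro l hl
    simp only [Finset.mem_Icc] at hl
    rw [if_neg (by omega)]

/-- canonical state probabilities: `x i l = P(A_{i-1} = k - l)` -/
noncomputable def xcan (k : ℕ) (τ : ℕ → ℝ) (i l : ℕ) : ℝ :=
  SB τ (Finset.Icc 1 (i-1)) (fdel k l)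

lemma Icc_one_zero : Finset.Icc 1 0 = (∅ : Finset ℕ) := by
  apply Finset.Icc_eq_empty; omega

lemma xcan_one (k : ℕ) (τ : ℕ → ℝ) (l : ℕ) :
    xcan k τ 1 l = if l = k then 1 else 0 := by
  unfold xcan
  norm_num [Icc_one_zero, SB_empty]
  unfold fdel
  congr 1
  simp only [eq_iff_iff]; omega

lemma fdel_top (k c : ℕ) : fdel k (k+1) c = 0 := by
  unfold fdel; rw [if_neg (by omega)]

lemma SB_fdel_top (τ : ℕ → ℝ) (T : Finset ℕ) (k : ℕ) : SB τ T (fdel k (k+1)) = 0 := by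
  rw [SB_congr (fun c => fdel_top k c), SB_const]

lemma xcan_rec (k : ℕ) (τ : ℕ → ℝ) {i : ℕ} (hi : 2 ≤ i) (l : ℕ) :
    xcan k τ i l = (1 - τ (i-1)) * xcan k τ (i-1) l + τ (i-1) * xcan k τ (i-1) (l+1) := by
  unfold xcan
  have h1 : Finset.Icc 1 (i-1) = insert (i-1) (Finset.Icc 1 (i-1-1)) := by
    ext x; simp only [Finset.mem_Icc, Finset.mem_insert]; omega
  have h2 : (i-1) ∉ Finset.Icc 1 (i-1-1) := by simp only [Finset.mem_Icc]; omega
  rw [h1, SB_insert _ _ h2, SB_congr (fun c => fdel_succ k l c)]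
  ring

lemma xcan_nonneg {k n : ℕ} {τ : ℕ → ℝ} (hτ : ∀ i ∈ Finset.Icc 1 n, 0 ≤ τ i ∧ τ i ≤ 1)
    {i : ℕ} (hi : i ≤ n) (l : ℕ) : 0 ≤ xcan k τ i l := by
  apply SB_nonneg
  · intro j hj
    exact hτ j (Finset.mem_Icc.mpr (by simp only [Finset.mem_Icc] at hj; omega))
  · intro c; unfold fdel; positivity

lemma xcan_sum {k : ℕ} (hk : 1 ≤ k) (τ : ℕ → ℝ) (i : ℕ) :
    ∑ l ∈ Finset.Icc 1 k, xcan k τ i l = SB τ (Finset.Icc 1 (i-1)) (find k) := by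
  unfold xcan
  rw [← SB_finsum, SB_congr (fun c => fdel_sum k hk c)]

lemma memP_canonical {k n : ℕ} (hk : 1 ≤ k) {τ : ℕ → ℝ}
    (hτ : ∀ i ∈ Finset.Icc 1 n, 0 ≤ τ i ∧ τ i ≤ 1) :
    memP k n (xcan k τ) (fun i l => τ i * xcan k τ i l) := by
  refine ⟨?_, ?_, ?_, ?_⟩
  · rw [xcan_one, if_pos rfl]
  · intro l h1l hlk; rw [xcan_one, if_neg (by omega)]
  · intro i hi l hl
    simp only [Finset.mem_Icc] at hi hl
    rw [xcan_rec k τ (by omega : 2 ≤ i) l]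
    by_cases hlt : l < k
    · rw [if_pos hlt]; ring
    · rw [if_neg hlt]
      have hlk : l = k := by omega
      have hz : xcan k τ (i-1) (l+1) = 0 := by rw [hlk]; exact SB_fdel_top _ _ _
      rw [hz]; ring
  · intro i hi l hl
    simp only [Finset.mem_Icc] at hi
    have hx := xcan_nonneg (k := k) hτ hi.2 l
    have hb := hτ i (Finset.mem_Icc.mpr hi)
    refine ⟨mul_nonneg hb.1 hx, ?_⟩
    show τ i * xcan k τ i l ≤ xcan k τ i l
    nlinarith [hb.1, hb.2, hx]

lemma x_unique {k n : ℕ} (hk : 1 ≤ k) {τ : ℕ → ℝ} {x y : ℕ → ℕ → ℝ}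
    (hxy : memP k n x y)
    (hy : ∀ i ∈ Finset.Icc 1 n, ∀ l ∈ Finset.Icc 1 k, y i l = τ i * x i l) :
    ∀ i ∈ Finset.Icc 1 n, ∀ l ∈ Finset.Icc 1 k, x i l = xcan k τ i l := by
  obtain ⟨h1, h2, h3, h4⟩ := hxy
  have key : ∀ i, 1 ≤ i → i ≤ n → ∀ l ∈ Finset.Icc 1 k, x i l = xcan k τ i l := by
    intro i h1i
    induction i, h1i using Nat.le_induction with
    | base =>
      intro _ l hl
      simp only [Finset.mem_Icc] at hl
      rw [xcan_one]
      by_cases hlk : l = k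
      · subst hlk; rw [if_pos rfl, h1]
      · rw [if_neg hlk, h2 l hl.1 (by omega)]
    | succ i h1i ih =>
      intro hin l hl
      have hiN : i ≤ n := by omega
      have hmem : i ∈ Finset.Icc 1 n := Finset.mem_Icc.mpr ⟨h1i, hiN⟩
      have hrec := h3 (i+1) (Finset.mem_Icc.mpr ⟨by omega, hin⟩) l hl
      simp only [Nat.add_sub_cancel] at hrec
      simp only [Finset.mem_Icc] at hl
      rw [hrec, hy i hmem l (Finset.mem_Icc.mpr hl), ih hiN l (Finset.mem_Icc.mpr hl)]
      have hxcr := xcan_rec k τ (by omega : 2 ≤ i + 1) l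
      simp only [Nat.add_sub_cancel] at hxcr
      by_cases hlt : l < k
      · rw [if_pos hlt, hy i hmem (l+1) (Finset.mem_Icc.mpr ⟨by omega, by omega⟩),
          ih hiN (l+1) (Finset.mem_Icc.mpr ⟨by omega, by omega⟩), hxcr]
        ring
      · rw [if_neg hlt, hxcr]
        have hlk : l = k := by omega
        have hz : xcan k τ i (l+1) = 0 := by rw [hlk]; exact SB_fdel_top _ _ _
        rw [hz]; ring
  intro i hi
  simp only [Finset.mem_Icc] at hi
  exact key i hi.1 hi.2

lemma coverSum_canonical {k n : ℕ} (hk : 1 ≤ k) (G : ℕ → ℕ → ℝ) (j : ℕ) {τ : ℕ → ℝ}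
    (hτ : ∀ i ∈ Finset.Icc 1 n, 0 ≤ τ i ∧ τ i ≤ 1) {x y : ℕ → ℕ → ℝ}
    (hx : ∀ i ∈ Finset.Icc 1 n, ∀ l ∈ Finset.Icc 1 k, x i l = xcan k τ i l)
    (hy : ∀ i ∈ Finset.Icc 1 n, ∀ l ∈ Finset.Icc 1 k, y i l = τ i * x i l) :
    coverSum k n G j x y =
      ∑ i ∈ Finset.Icc 1 n, min (τ i) (G i j) * SB τ (Finset.Icc 1 (i-1)) (find k) := by
  unfold coverSum
  apply Finset.sum_congr rfl
  intro i hi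
  rw [← xcan_sum hk τ i, Finset.mul_sum]
  apply Finset.sum_congr rfl
  intro l hl
  have hxn : 0 ≤ xcan k τ i l := xcan_nonneg hτ (by simp only [Finset.mem_Icc] at hi; omega) l
  rw [hy i hi l hl, hx i hi l hl, ← min_mul_of_nonneg _ _ hxn]

lemma G_mono {n m : ℕ} {G : ℕ → ℕ → ℝ} (hG : IsTypeDist n m G) {i : ℕ}
    (hi : i ∈ Finset.Icc 1 n) : ∀ {a b : ℕ}, a ≤ b → b ≤ m → G i a ≤ G i b := by
  intro a b hab
  induction b, hab using Nat.le_induction with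
  | base => intro _; exact le_refl _
  | succ b hab ih =>
    intro hbm
    have h := (hG i hi).2.2 (b+1) (Finset.mem_Icc.mpr ⟨by omega, hbm⟩)
    simp only [Nat.add_sub_cancel] at h
    exact le_trans (ih (by omega)) h

lemma G_nonneg {n m : ℕ} {G : ℕ → ℕ → ℝ} (hG : IsTypeDist n m G) {i : ℕ}
    (hi : i ∈ Finset.Icc 1 n) {a : ℕ} (ha : a ≤ m) : 0 ≤ G i a := by
  have := G_mono hG hi (Nat.zero_le a) ha
  rwa [(hG i hi).1] at this

lemma G_le_one {n m : ℕ} {G : ℕ → ℕ → ℝ} (hG : IsTypeDist n m G) {i : ℕ}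
    (hi : i ∈ Finset.Icc 1 n) {a : ℕ} (ha : a ≤ m) : G i a ≤ 1 := by
  have := G_mono hG hi ha (le_refl m)
  rwa [(hG i hi).2.1] at this

lemma tau_bounds {n m : ℕ} {G : ℕ → ℕ → ℝ} (hG : IsTypeDist n m G) {J : ℕ}
    (hJ : J ∈ Finset.Icc 1 m) {ρ : ℝ} (hρ : ρ ∈ Set.Ioc (0:ℝ) 1) :
    ∀ i ∈ Finset.Icc 1 n, 0 ≤ tauOf G J ρ i ∧ tauOf G J ρ i ≤ 1 := by
  intro i hi
  simp only [Finset.mem_Icc] at hJ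
  have h0 : 0 ≤ G i (J-1) := G_nonneg hG hi (by omega)
  have h1 : G i J ≤ 1 := G_le_one hG hi hJ.2
  have h01 : G i (J-1) ≤ G i J := G_mono hG hi (by omega) hJ.2
  obtain ⟨hρ0, hρ1⟩ := hρ
  unfold tauOf
  constructor
  · nlinarith
  · nlinarith

lemma tau_le_GJ {n m : ℕ} {G : ℕ → ℕ → ℝ} (hG : IsTypeDist n m G) {J : ℕ}
    (hJ : J ∈ Finset.Icc 1 m) {ρ : ℝ} (hρ : ρ ∈ Set.Ioc (0:ℝ) 1) {i : ℕ}
    (hi : i ∈ Finset.Icc 1 n) : G i (J-1) ≤ tauOf G J ρ i ∧ tauOf G J ρ i ≤ G i J := by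
  simp only [Finset.mem_Icc] at hJ
  have h01 : G i (J-1) ≤ G i J := G_mono hG hi (by omega) hJ.2
  obtain ⟨hρ0, hρ1⟩ := hρ
  unfold tauOf
  constructor <;> nlinarith

lemma card_Icc_one (n : ℕ) : (Finset.Icc 1 n).card = n := by
  rw [Nat.card_Icc]; omega

lemma fmin_nonneg (k c : ℕ) : 0 ≤ fmin k c := le_min (by positivity) (by positivity)
lemma fmin_le_k (k c : ℕ) : fmin k c ≤ k := min_le_right _ _
lemma fmin_le_id (k c : ℕ) : fmin k c ≤ (c:ℝ) := min_le_left _ _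
lemma fmin_mono (k c : ℕ) : fmin k c ≤ fmin k (c+1) := by
  unfold fmin; apply min_le_min _ (le_refl _); push_cast; linarith
lemma find_nonneg (k c : ℕ) : 0 ≤ find k c := by unfold find; positivity
lemma find_le_one (k c : ℕ) : find k c ≤ 1 := by
  unfold find; by_cases h : c < k <;> simp [h]
lemma find_anti (k c : ℕ) : find k (c+1) ≤ find k c := by
  unfold find
  by_cases h : c + 1 < k
  · rw [if_pos h, if_pos (by omega)]
  · rw [if_neg h]; by_cases h2 : c < k <;> simp [h2]

/-- `Q^Proph` properties -/
lemma QProph_nonneg {k n m : ℕ} {G : ℕ → ℕ → ℝ} (hG : IsTypeDist n m G) {j : ℕ}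
    (hj : j ≤ m) : 0 ≤ QProph k n G j :=
  SB_nonneg (fun i hi => ⟨G_nonneg hG hi hj, G_le_one hG hi hj⟩) (fmin_nonneg k)

lemma QProph_le_k {k n m : ℕ} {G : ℕ → ℕ → ℝ} (hG : IsTypeDist n m G) {j : ℕ}
    (hj : j ≤ m) : QProph k n G j ≤ k :=
  SB_le_const (fun i hi => ⟨G_nonneg hG hi hj, G_le_one hG hi hj⟩) (fmin_le_k k)

lemma QProph_le_sum {k n m : ℕ} {G : ℕ → ℕ → ℝ} (hG : IsTypeDist n m G) {j : ℕ}
    (hj : j ≤ m) : QProph k n G j ≤ ∑ i ∈ Finset.Icc 1 n, G i j := by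
  have h := SB_mono_f (p := fun i => G i j) (T := Finset.Icc 1 n)
    (fun i hi => ⟨G_nonneg hG hi hj, G_le_one hG hi hj⟩) (fmin_le_id k)
  rw [SB_id] at h
  exact h

lemma QProph_m {k n m : ℕ} (hkn : k ≤ n) {G : ℕ → ℕ → ℝ} (hG : IsTypeDist n m G) :
    QProph k n G m = k := by
  unfold QProph
  rw [eMinBer_eq_SB, SB_one_p (fun i hi => (hG i hi).2.1), card_Icc_one]
  unfold fmin
  rw [min_eq_right (by exact_mod_cast hkn)]

lemma QExAnte_nonneg {k n m : ℕ} {G : ℕ → ℕ → ℝ} (hG : IsTypeDist n m G) {j : ℕ}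
    (hj : j ≤ m) (hk : 1 ≤ k) : 0 ≤ QExAnte k n G j := by
  unfold QExAnte
  apply le_min
  · exact Finset.sum_nonneg fun i hi => G_nonneg hG hi hj
  · positivity

lemma QExAnte_le_k {k n : ℕ} (G : ℕ → ℕ → ℝ) (j : ℕ) : QExAnte k n G j ≤ k :=
  min_le_right _ _

lemma QExAnte_le_sum {k n : ℕ} (G : ℕ → ℕ → ℝ) (j : ℕ) :
    QExAnte k n G j ≤ ∑ i ∈ Finset.Icc 1 n, G i j := min_le_left _ _

lemma QExAnte_m {k n m : ℕ} (hkn : k ≤ n) {G : ℕ → ℕ → ℝ} (hG : IsTypeDist n m G) :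
    QExAnte k n G m = k := by
  unfold QExAnte
  rw [Finset.sum_congr rfl (fun i hi => (hG i hi).2.1), Finset.sum_const, card_Icc_one]
  rw [nsmul_eq_mul, mul_one, min_eq_right (by exact_mod_cast hkn)]

/-- closed form of the cover sum for the canonical solution with acceptance probs `τ` -/
noncomputable def Cval (k n : ℕ) (G : ℕ → ℕ → ℝ) (j : ℕ) (τ : ℕ → ℝ) : ℝ :=
  ∑ i ∈ Finset.Icc 1 n, min (τ i) (G i j) * SB τ (Finset.Icc 1 (i-1)) (find k)

section InnerLP

variable {k n m : ℕ} {G : ℕ → ℕ → ℝ} {J : ℕ} {ρ : ℝ} {Q : ℕ → ℝ}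

lemma SB_find_mem {τ : ℕ → ℝ} (hτ : ∀ i ∈ Finset.Icc 1 n, 0 ≤ τ i ∧ τ i ≤ 1)
    {i : ℕ} (hi : i ≤ n) :
    0 ≤ SB τ (Finset.Icc 1 (i-1)) (find k) ∧ SB τ (Finset.Icc 1 (i-1)) (find k) ≤ 1 := by
  have hsub : ∀ a ∈ Finset.Icc 1 (i-1), 0 ≤ τ a ∧ τ a ≤ 1 := by
    intro a ha
    simp only [Finset.mem_Icc] at ha ⊢
    exact hτ a (Finset.mem_Icc.mpr ⟨ha.1, by omega⟩)
  exact ⟨SB_nonneg hsub (find_nonneg k), SB_le_const hsub (find_le_one k)⟩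

lemma mem_innerLP_set (hk : 1 ≤ k)
    (hτ : ∀ i ∈ Finset.Icc 1 n, 0 ≤ tauOf G J ρ i ∧ tauOf G J ρ i ≤ 1) {θ : ℝ}
    (hcons : ∀ j ∈ Finset.Icc 1 m, θ * Q j ≤ Cval k n G j (tauOf G J ρ)) :
    θ ∈ {θ : ℝ | ∃ x y, memP k n x y ∧
      (∀ i ∈ Finset.Icc 1 n, ∀ l ∈ Finset.Icc 1 k, y i l = tauOf G J ρ i * x i l) ∧
      ∀ j ∈ Finset.Icc 1 m, θ * Q j ≤ coverSum k n G j x y} := by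
  refine ⟨xcan k (tauOf G J ρ), fun i l => tauOf G J ρ i * xcan k (tauOf G J ρ) i l,
    memP_canonical hk hτ, fun i _ l _ => rfl, ?_⟩
  intro j hj
  rw [coverSum_canonical hk G j hτ (fun i _ l _ => rfl) (fun i _ l _ => rfl)]
  exact hcons j hj

lemma bound_of_mem_innerLP_set (hk : 1 ≤ k)
    (hτ : ∀ i ∈ Finset.Icc 1 n, 0 ≤ tauOf G J ρ i ∧ tauOf G J ρ i ≤ 1) {θ : ℝ}
    (hθ : θ ∈ {θ : ℝ | ∃ x y, memP k n x y ∧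
      (∀ i ∈ Finset.Icc 1 n, ∀ l ∈ Finset.Icc 1 k, y i l = tauOf G J ρ i * x i l) ∧
      ∀ j ∈ Finset.Icc 1 m, θ * Q j ≤ coverSum k n G j x y}) :
    ∀ j ∈ Finset.Icc 1 m, θ * Q j ≤ Cval k n G j (tauOf G J ρ) := by
  obtain ⟨x, y, hmem, hy, hcons⟩ := hθ
  intro j hj
  have hx := x_unique hk hmem hy
  unfold Cval
  rw [← coverSum_canonical hk G j hτ hx hy]
  exact hcons j hj

lemma Cval_nonneg (hG : IsTypeDist n m G) {j : ℕ} (hj : j ≤ m) {τ : ℕ → ℝ}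
    (hτ : ∀ i ∈ Finset.Icc 1 n, 0 ≤ τ i ∧ τ i ≤ 1) : 0 ≤ Cval k n G j τ := by
  apply Finset.sum_nonneg
  intro i hi
  simp only [Finset.mem_Icc] at hi
  apply mul_nonneg
  · exact le_min (hτ i (Finset.mem_Icc.mpr hi)).1 (G_nonneg hG (Finset.mem_Icc.mpr hi) hj)
  · exact (SB_find_mem hτ hi.2).1

lemma Cval_le_n (hG : IsTypeDist n m G) {j : ℕ} (hj : j ≤ m) {τ : ℕ → ℝ}
    (hτ : ∀ i ∈ Finset.Icc 1 n, 0 ≤ τ i ∧ τ i ≤ 1) : Cval k n G j τ ≤ n := by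
  have : Cval k n G j τ ≤ ∑ i ∈ Finset.Icc 1 n, 1 := by
    apply Finset.sum_le_sum
    intro i hi
    simp only [Finset.mem_Icc] at hi
    have h1 := SB_find_mem (k := k) hτ hi.2
    have h2 := hτ i (Finset.mem_Icc.mpr hi)
    have h3 : min (τ i) (G i j) ≤ 1 := le_trans (min_le_left _ _) h2.2
    have h4 : 0 ≤ min (τ i) (G i j) :=
      le_min h2.1 (G_nonneg hG (Finset.mem_Icc.mpr hi) hj)
    nlinarith
  rwa [Finset.sum_const, card_Icc_one, nsmul_eq_mul, mul_one] at this

lemma innerLP_bddAbove (hk : 1 ≤ k) (hm : 1 ≤ m) (hG : IsTypeDist n m G)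
    (hτ : ∀ i ∈ Finset.Icc 1 n, 0 ≤ tauOf G J ρ i ∧ tauOf G J ρ i ≤ 1)
    (hQm : Q m = k) :
    ∀ θ ∈ {θ : ℝ | ∃ x y, memP k n x y ∧
      (∀ i ∈ Finset.Icc 1 n, ∀ l ∈ Finset.Icc 1 k, y i l = tauOf G J ρ i * x i l) ∧
      ∀ j ∈ Finset.Icc 1 m, θ * Q j ≤ coverSum k n G j x y}, θ ≤ (n:ℝ) := by
  intro θ hθ
  have h := bound_of_mem_innerLP_set hk hτ hθ m (Finset.mem_Icc.mpr ⟨hm, le_refl m⟩)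
  rw [hQm] at h
  have h2 : Cval k n G m (tauOf G J ρ) ≤ n := Cval_le_n hG (le_refl m) hτ
  have hk' : (1:ℝ) ≤ k := by exact_mod_cast hk
  rcases le_or_gt θ 0 with h3 | h3
  · exact le_trans h3 (by positivity)
  · nlinarith

lemma innerLP_le_bound (hk : 1 ≤ k)
    (hτ : ∀ i ∈ Finset.Icc 1 n, 0 ≤ tauOf G J ρ i ∧ tauOf G J ρ i ≤ 1)
    {b : ℝ} (hb : 0 ≤ b)
    (hbd : ∀ θ : ℝ, (∀ j ∈ Finset.Icc 1 m, θ * Q j ≤ Cval k n G j (tauOf G J ρ)) → θ ≤ b) :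
    innerLP_OST k n m G J ρ Q ≤ b := by
  apply Real.sSup_le _ hb
  intro θ hθ
  exact hbd θ (bound_of_mem_innerLP_set hk hτ hθ)

lemma innerLP_ge (hk : 1 ≤ k) (hm : 1 ≤ m) (hG : IsTypeDist n m G)
    (hτ : ∀ i ∈ Finset.Icc 1 n, 0 ≤ tauOf G J ρ i ∧ tauOf G J ρ i ≤ 1)
    (hQm : Q m = k) {θ : ℝ}
    (hcons : ∀ j ∈ Finset.Icc 1 m, θ * Q j ≤ Cval k n G j (tauOf G J ρ)) :
    θ ≤ innerLP_OST k n m G J ρ Q := by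
  apply le_csSup ⟨(n:ℝ), fun θ' hθ' => innerLP_bddAbove hk hm hG hτ hQm θ' hθ'⟩
  exact mem_innerLP_set hk hτ hcons

lemma innerLP_nonneg (hk : 1 ≤ k) (hm : 1 ≤ m) (hG : IsTypeDist n m G)
    (hτ : ∀ i ∈ Finset.Icc 1 n, 0 ≤ tauOf G J ρ i ∧ tauOf G J ρ i ≤ 1)
    (hQm : Q m = k) :
    0 ≤ innerLP_OST k n m G J ρ Q := by
  apply innerLP_ge hk hm hG hτ hQm
  intro j hj
  simp only [Finset.mem_Icc] at hj
  rw [zero_mul]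
  exact Cval_nonneg hG hj.2 hτ

end InnerLP

lemma lb_constraints {k n m : ℕ} {G : ℕ → ℕ → ℝ} {J : ℕ} {ρ : ℝ} {Q : ℕ → ℝ}
    (hk : 1 ≤ k) (hkn : k < n) (hG : IsTypeDist n m G)
    (hJ : J ∈ Finset.Icc 1 m) (hρ : ρ ∈ Set.Ioc (0:ℝ) 1)
    (hQk : ∀ j ∈ Finset.Icc 1 m, Q j ≤ k)
    (hQsum : ∀ j ∈ Finset.Icc 1 m, Q j ≤ ∑ i ∈ Finset.Icc 1 n, G i j)
    (hcross : SB (tauOf G J ρ) (Finset.Icc 1 (n-1)) (fmin k)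
      = k * SB (tauOf G J ρ) (Finset.Icc 1 (n-1)) (find k)) :
    ∀ j ∈ Finset.Icc 1 m,
      (SB (tauOf G J ρ) (Finset.Icc 1 (n-1)) (find k)) * Q j ≤ Cval k n G j (tauOf G J ρ) := by
  set τ := tauOf G J ρ with hτdef
  have hτ : ∀ i ∈ Finset.Icc 1 n, 0 ≤ τ i ∧ τ i ≤ 1 := tau_bounds hG hJ hρ
  have hτ' : ∀ i ∈ Finset.Icc 1 (n-1), 0 ≤ τ i ∧ τ i ≤ 1 := by
    intro i hi
    simp only [Finset.mem_Icc] at hi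
    exact hτ i (Finset.mem_Icc.mpr ⟨hi.1, by omega⟩)
  set θ₀ := SB τ (Finset.Icc 1 (n-1)) (find k) with hθ₀def
  have hθ₀ : 0 ≤ θ₀ := SB_nonneg hτ' (find_nonneg k)
  intro j hj
  simp only [Finset.mem_Icc] at hj hJ
  by_cases hcase : J ≤ j
  · -- min is τ i; Cval = E[min(A_n,k)] ≥ E[min(A_{n-1},k)] = k θ₀ ≥ Q j θ₀
    have hCval : Cval k n G j τ = SB τ (Finset.Icc 1 n) (fmin k) := by
      unfold Cval
      rw [EM_enum]
      apply Finset.sum_congr rfl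
      intro i hi
      congr 1
      apply min_eq_left
      calc τ i ≤ G i J := (tau_le_GJ hG (Finset.mem_Icc.mpr hJ) hρ hi).2
        _ ≤ G i j := G_mono hG hi hcase hj.2
    have hmono : SB τ (Finset.Icc 1 (n-1)) (fmin k) ≤ SB τ (Finset.Icc 1 n) (fmin k) := by
      have heq : Finset.Icc 1 n = insert n (Finset.Icc 1 (n-1)) := by
        ext x; simp only [Finset.mem_Icc, Finset.mem_insert]; omega
      have hnm : n ∉ Finset.Icc 1 (n-1) := by simp only [Finset.mem_Icc]; omega
      rw [heq, EM_insert _ _ hnm]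
      have h1 : 0 ≤ τ n := (hτ n (Finset.mem_Icc.mpr ⟨by omega, le_refl n⟩)).1
      nlinarith [hθ₀, h1]
    have hQj := hQk j (Finset.mem_Icc.mpr hj)
    calc θ₀ * Q j ≤ θ₀ * k := mul_le_mul_of_nonneg_left hQj hθ₀
      _ = SB τ (Finset.Icc 1 (n-1)) (fmin k) := by rw [hcross]; ring
      _ ≤ SB τ (Finset.Icc 1 n) (fmin k) := hmono
      _ = Cval k n G j τ := hCval.symm
  · -- min is G i j
    have hCval : Cval k n G j τ = ∑ i ∈ Finset.Icc 1 n, G i j * SB τ (Finset.Icc 1 (i-1)) (find k) := by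
      unfold Cval
      apply Finset.sum_congr rfl
      intro i hi
      congr 1
      apply min_eq_right
      calc G i j ≤ G i (J-1) := G_mono hG hi (by omega) (by omega)
        _ ≤ τ i := (tau_le_GJ hG (Finset.mem_Icc.mpr hJ) hρ hi).1
    have hterm : ∀ i ∈ Finset.Icc 1 n,
        G i j * θ₀ ≤ G i j * SB τ (Finset.Icc 1 (i-1)) (find k) := by
      intro i hi
      apply mul_le_mul_of_nonneg_left _ (G_nonneg hG hi hj.2)
      apply SB_subset_anti (find_anti k) hτ'
      simp only [Finset.mem_Icc] at hi ⊢
      intro a ha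
      simp only [Finset.mem_Icc] at ha ⊢
      omega
    calc θ₀ * Q j ≤ θ₀ * ∑ i ∈ Finset.Icc 1 n, G i j :=
          mul_le_mul_of_nonneg_left (hQsum j (Finset.mem_Icc.mpr hj)) hθ₀
      _ = ∑ i ∈ Finset.Icc 1 n, G i j * θ₀ := by rw [Finset.mul_sum]; exact Finset.sum_congr rfl fun i _ => by ring
      _ ≤ ∑ i ∈ Finset.Icc 1 n, G i j * SB τ (Finset.Icc 1 (i-1)) (find k) :=
          Finset.sum_le_sum hterm
      _ = Cval k n G j τ := hCval.symm

lemma SB_congr_p {p q : ℕ → ℝ} {T : Finset ℕ} (h : ∀ i ∈ T, p i = q i) (f : ℕ → ℝ) :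
    SB p T f = SB q T f := by
  unfold SB bw
  apply Finset.sum_congr rfl
  intro S hS
  have hS' : S ⊆ T := Finset.mem_powerset.mp hS
  have h1 : ∏ i ∈ S, p i = ∏ i ∈ S, q i := Finset.prod_congr rfl (fun i hi => h i (hS' hi))
  have h2 : ∏ i ∈ T \ S, (1 - p i) = ∏ i ∈ T \ S, (1 - q i) :=
    Finset.prod_congr rfl (fun i hi => by rw [h i (Finset.mem_sdiff.mp hi).1])
  rw [h1, h2]

/-- auxiliary crossing functions -/
noncomputable def Dcross (k n : ℕ) (G : ℕ → ℕ → ℝ) (j : ℕ) : ℝ :=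
  SB (fun i => G i j) (Finset.Icc 1 (n-1)) (fmin k)
    - (k:ℝ) * SB (fun i => G i j) (Finset.Icc 1 (n-1)) (find k)

noncomputable def psiCross (k n : ℕ) (G : ℕ → ℕ → ℝ) (J : ℕ) (ρ : ℝ) : ℝ :=
  SB (fun i => (1-ρ) * G i (J-1) + ρ * G i J) (Finset.Icc 1 (n-1)) (fmin k)
    - (k:ℝ) * SB (fun i => (1-ρ) * G i (J-1) + ρ * G i J) (Finset.Icc 1 (n-1)) (find k)

lemma psiCross_continuous (k n : ℕ) (G : ℕ → ℕ → ℝ) (J : ℕ) :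
    Continuous (psiCross k n G J) := by
  unfold psiCross
  have hPi : ∀ i : ℕ, Continuous (fun ρ : ℝ => (1-ρ) * G i (J-1) + ρ * G i J) := by
    intro i
    exact ((continuous_const.sub continuous_id).mul continuous_const).add
      (continuous_id.mul continuous_const)
  exact (SB_continuous hPi _ _).sub
    (continuous_const.mul (SB_continuous hPi _ _))

/-- existence of a crossing point `(J, ρ)` where `E[min(A_{n-1},k)] = k·P(A_{n-1}<k)` -/
lemma exists_crossing {k n m : ℕ} {G : ℕ → ℕ → ℝ} (hk : 1 ≤ k) (hkn : k < n)
    (hm : 1 ≤ m) (hG : IsTypeDist n m G) :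
    ∃ J ∈ Finset.Icc 1 m, ∃ ρ ∈ Set.Ioc (0:ℝ) 1,
      SB (tauOf G J ρ) (Finset.Icc 1 (n-1)) (fmin k)
        = k * SB (tauOf G J ρ) (Finset.Icc 1 (n-1)) (find k) := by
  classical
  have hsubset : ∀ i ∈ Finset.Icc 1 (n-1), i ∈ Finset.Icc 1 n := by
    intro i hi; simp only [Finset.mem_Icc] at hi ⊢; omega
  have hD0 : Dcross k n G 0 = -k := by
    unfold Dcross
    rw [SB_zero_p (fun i hi => (hG i (hsubset i hi)).1),
      SB_zero_p (fun i hi => (hG i (hsubset i hi)).1)]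
    unfold fmin find
    rw [if_pos (by omega : 0 < k)]
    push_cast
    rw [min_eq_left (by positivity)]
    ring
  have hDm : 0 ≤ Dcross k n G m := by
    unfold Dcross
    rw [SB_one_p (fun i hi => (hG i (hsubset i hi)).2.1),
      SB_one_p (fun i hi => (hG i (hsubset i hi)).2.1), card_Icc_one]
    unfold fmin find
    rw [if_neg (by omega : ¬ (n-1 < k)), min_eq_right (by exact_mod_cast (by omega : k ≤ n-1))]
    simp

  have hex : ∃ j, 0 ≤ Dcross k n G j := ⟨m, hDm⟩
  have hDJ : 0 ≤ Dcross k n G (Nat.find hex) := Nat.find_spec hex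
  set J := Nat.find hex with hJdef
  have hJm : J ≤ m := Nat.find_min' hex hDm
  have hJ1 : 1 ≤ J := by
    by_contra h
    have hJ0 : J = 0 := by omega
    rw [hJ0, hD0] at hDJ
    have : (0:ℝ) < k := by positivity
    linarith
  have hDJ1 : Dcross k n G (J-1) < 0 := by
    have := Nat.find_min hex (m := J - 1) (by omega)
    linarith [not_le.mp this]
  have hψ0 : psiCross k n G J 0 = Dcross k n G (J-1) := by
    unfold psiCross Dcross
    rw [SB_congr_p (q := fun i => G i (J-1)) (fun i _ => by ring) (fmin k),
      SB_congr_p (q := fun i => G i (J-1)) (fun i _ => by ring) (find k)]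
  have hψ1 : psiCross k n G J 1 = Dcross k n G J := by
    unfold psiCross Dcross
    rw [SB_congr_p (q := fun i => G i J) (fun i _ => by ring) (fmin k),
      SB_congr_p (q := fun i => G i J) (fun i _ => by ring) (find k)]
  have hIVT := intermediate_value_Icc (by norm_num : (0:ℝ) ≤ 1)
    (psiCross_continuous k n G J).continuousOn
  have h0mem : (0:ℝ) ∈ Set.Icc (psiCross k n G J 0) (psiCross k n G J 1) := by
    rw [hψ0, hψ1]
    exact ⟨le_of_lt hDJ1, hDJ⟩
  obtain ⟨ρ, hρmem, hρval⟩ := hIVT h0mem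
  refine ⟨J, Finset.mem_Icc.mpr ⟨hJ1, hJm⟩, ρ, ⟨?_, hρmem.2⟩, ?_⟩
  · rcases lt_or_eq_of_le hρmem.1 with h | h
    · exact h
    · exfalso
      rw [← h, hψ0] at hρval
      linarith
  · have heq : psiCross k n G J ρ = 0 := hρval
    unfold psiCross at heq
    have he1 : SB (tauOf G J ρ) (Finset.Icc 1 (n-1)) (fmin k)
        = SB (fun i => (1-ρ) * G i (J-1) + ρ * G i J) (Finset.Icc 1 (n-1)) (fmin k) :=
      SB_congr_p (fun i _ => rfl) _
    have he2 : SB (tauOf G J ρ) (Finset.Icc 1 (n-1)) (find k)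
        = SB (fun i => (1-ρ) * G i (J-1) + ρ * G i J) (Finset.Icc 1 (n-1)) (find k) :=
      SB_congr_p (fun i _ => rfl) _
    rw [he1, he2]
    linarith

/-- trivial type distribution (needed for nonemptiness) -/
noncomputable def Gtriv : ℕ → ℕ → ℝ := fun _ j => if j = 0 then 0 else 1

lemma Gtriv_typedist (n : ℕ) : IsTypeDist n 1 Gtriv := by
  intro i _
  refine ⟨rfl, rfl, ?_⟩
  intro j hj
  simp only [Finset.mem_Icc] at hj
  have : j = 1 := by omega
  subst this
  norm_num [Gtriv]

/-- the hard instance: `n-1` Bernoulli agents plus one rare-high agent -/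
noncomputable def Ginst (n : ℕ) (q : ℕ → ℝ) (δ : ℝ) : ℕ → ℕ → ℝ := fun i j =>
  if j = 0 then 0
  else if i = n then (if j ≤ 2 then δ else 1)
  else if j = 1 then 0 else if j = 2 then q i else 1

lemma Ginst_typedist {n : ℕ} {q : ℕ → ℝ} {δ : ℝ} (hn : 1 ≤ n)
    (hq : ∀ i ∈ Finset.Icc 1 (n-1), q i ∈ Set.Icc (0:ℝ) 1) (hδ0 : 0 < δ) (hδ1 : δ ≤ 1) :
    IsTypeDist n 3 (Ginst n q δ) := by
  intro i hi
  simp only [Finset.mem_Icc] at hi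
  refine ⟨by simp [Ginst], ?_, ?_⟩
  · by_cases h : i = n <;> simp [Ginst, h]
  · intro j hj
    simp only [Finset.mem_Icc] at hj
    have hj3 : j = 1 ∨ j = 2 ∨ j = 3 := by omega
    by_cases h : i = n
    · rcases hj3 with rfl | rfl | rfl <;> simp [Ginst, h] <;> linarith
    · have hq' := hq i (Finset.mem_Icc.mpr ⟨hi.1, by omega⟩)
      obtain ⟨hq0, hq1⟩ := hq'
      rcases hj3 with rfl | rfl | rfl <;> simp [Ginst, h] <;> linarith

lemma Ginst_ne_n {n : ℕ} {q : ℕ → ℝ} {δ : ℝ} {i : ℕ} (h : i ≠ n) :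
    Ginst n q δ i 1 = 0 ∧ Ginst n q δ i 2 = q i ∧ Ginst n q δ i 3 = 1 := by
  refine ⟨?_, ?_, ?_⟩ <;> simp [Ginst, h]

lemma Ginst_at_n {n : ℕ} {q : ℕ → ℝ} {δ : ℝ} :
    Ginst n q δ n 1 = δ ∧ Ginst n q δ n 2 = δ ∧ Ginst n q δ n 3 = 1 := by
  refine ⟨?_, ?_, ?_⟩ <;> simp [Ginst]

lemma Ginst_sum1 {n : ℕ} (hn : 1 ≤ n) (q : ℕ → ℝ) (δ : ℝ) :
    ∑ i ∈ Finset.Icc 1 n, Ginst n q δ i 1 = δ := by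
  rw [Finset.sum_eq_single_of_mem n (Finset.mem_Icc.mpr ⟨hn, le_refl n⟩)]
  · exact Ginst_at_n.1
  · intro i _ hne
    exact (Ginst_ne_n hne).1

/-- `Q^Proph_1 = δ` for the instance -/
lemma QProph_inst1 {k n : ℕ} (hk : 1 ≤ k) (hn : 1 ≤ n) (q : ℕ → ℝ) (δ : ℝ) :
    QProph k n (Ginst n q δ) 1 = δ := by
  unfold QProph
  rw [eMinBer_eq_SB, EM_enum]
  rw [Finset.sum_eq_single_of_mem n (Finset.mem_Icc.mpr ⟨hn, le_refl n⟩)]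
  · rw [Ginst_at_n.1, SB_zero_p (fun i hi => by
      simp only [Finset.mem_Icc] at hi
      exact (Ginst_ne_n (by omega : i ≠ n)).1)]
    unfold find
    rw [if_pos (by omega : 0 < k)]
    ring
  · intro i _ hne
    rw [(Ginst_ne_n hne).1, zero_mul]

lemma QExAnte_inst1 {k n : ℕ} (hk : 1 ≤ k) (hn : 1 ≤ n) (q : ℕ → ℝ) {δ : ℝ}
    (hδ0 : 0 < δ) (hδ1 : δ ≤ 1) : QExAnte k n (Ginst n q δ) 1 = δ := by
  unfold QExAnte
  rw [Ginst_sum1 hn q δ]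
  apply min_eq_left
  have : (1:ℝ) ≤ k := by exact_mod_cast hk
  linarith

lemma Icc_pred_mem {n i : ℕ} (hi : i ∈ Finset.Icc 1 (n-1)) (hn : 1 ≤ n) :
    i ∈ Finset.Icc 1 n ∧ i ≠ n := by
  simp only [Finset.mem_Icc] at hi ⊢
  omega

lemma inst_theta_bound {k n : ℕ} (hk : 1 ≤ k) (hkn : k < n) {q : ℕ → ℝ} {δ α : ℝ}
    (hq : ∀ i ∈ Finset.Icc 1 (n-1), q i ∈ Set.Icc (0:ℝ) 1) (hδ0 : 0 < δ) (hδ1 : δ ≤ 1)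
    (hα : α = SB q (Finset.Icc 1 (n-1)) (find k))
    (hαk : SB q (Finset.Icc 1 (n-1)) (fmin k) = k * α)
    {J : ℕ} (hJ : J ∈ Finset.Icc 1 3) {ρ : ℝ} (hρ : ρ ∈ Set.Ioc (0:ℝ) 1)
    {Q : ℕ → ℝ} (hQ1 : Q 1 = δ) (hQ3 : Q 3 = k) {θ : ℝ}
    (hcons : ∀ j ∈ Finset.Icc 1 3, θ * Q j ≤ Cval k n (Ginst n q δ) j (tauOf (Ginst n q δ) J ρ)) :
    θ ≤ α + δ := by
  have hn1 : 1 ≤ n := by omega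
  have hG : IsTypeDist n 3 (Ginst n q δ) := Ginst_typedist hn1 hq hδ0 hδ1
  have hτ : ∀ i ∈ Finset.Icc 1 n, 0 ≤ tauOf (Ginst n q δ) J ρ i ∧ tauOf (Ginst n q δ) J ρ i ≤ 1 :=
    tau_bounds hG hJ hρ
  set τ := tauOf (Ginst n q δ) J ρ with hτdef
  have hτ' : ∀ i ∈ Finset.Icc 1 (n-1), 0 ≤ τ i ∧ τ i ≤ 1 :=
    fun i hi => hτ i (Icc_pred_mem hi hn1).1
  have hqb : ∀ i ∈ Finset.Icc 1 (n-1), 0 ≤ q i ∧ q i ≤ 1 :=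
    fun i hi => ⟨(hq i hi).1, (hq i hi).2⟩
  have hα0 : 0 ≤ α := hα ▸ SB_nonneg hqb (find_nonneg k)
  have hkR : (1:ℝ) ≤ k := by exact_mod_cast hk
  -- bound from constraint j = 3
  have hB3 : θ * k ≤ SB τ (Finset.Icc 1 n) (fmin k) := by
    have h := hcons 3 (by simp)
    rw [hQ3] at h
    refine le_trans h (le_of_eq ?_)
    unfold Cval
    rw [EM_enum]
    apply Finset.sum_congr rfl
    intro i hi
    congr 1
    apply min_eq_left
    have h3 : Ginst n q δ i 3 = 1 := by
      by_cases hin : i = n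
      · rw [hin]; exact Ginst_at_n.2.2
      · exact (Ginst_ne_n hin).2.2
    rw [h3]
    exact (hτ i hi).2
  -- bound from constraint j = 1
  have hB1 : θ * δ ≤ δ * SB τ (Finset.Icc 1 (n-1)) (find k) := by
    have h := hcons 1 (by simp)
    rw [hQ1] at h
    refine le_trans h ?_
    unfold Cval
    rw [Finset.sum_eq_single_of_mem n (Finset.mem_Icc.mpr ⟨hn1, le_refl n⟩)]
    · rw [Ginst_at_n.1]
      have hSB := SB_find_mem (k := k) hτ (le_refl n)
      exact mul_le_mul_of_nonneg_right (min_le_right _ _) hSB.1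
    · intro i hi hne
      rw [(Ginst_ne_n hne).1, min_eq_right (hτ i hi).1, zero_mul]
  simp only [Finset.mem_Icc] at hJ
  have hJcase : J = 1 ∨ J = 2 ∨ J = 3 := by omega
  obtain ⟨hρ0, hρ1⟩ := hρ
  rcases hJcase with rfl | rfl | rfl
  · -- J = 1 : τ is 0 except ρδ at n
    have hτval : ∀ i ∈ Finset.Icc 1 n, τ i = if i = n then ρ * δ else 0 := by
      intro i hi
      rw [hτdef]
      unfold tauOf
      by_cases hin : i = n
      · rw [if_pos hin, hin]
        have h0 : Ginst n q δ n 0 = 0 := by simp [Ginst]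
        rw [show (1:ℕ) - 1 = 0 from rfl, h0, Ginst_at_n.1]
        ring
      · rw [if_neg hin]
        have h0 : Ginst n q δ i 0 = 0 := by simp [Ginst]
        rw [show (1:ℕ) - 1 = 0 from rfl, h0, (Ginst_ne_n hin).1]
        ring
    have hEM : SB τ (Finset.Icc 1 n) (fmin k) ≤ ρ * δ := by
      have h1 : SB τ (Finset.Icc 1 n) (fmin k) ≤ SB τ (Finset.Icc 1 n) (fun c => (c:ℝ)) :=
        SB_mono_f hτ (fmin_le_id k)
      rw [SB_id] at h1
      refine le_trans h1 (le_of_eq ?_)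
      rw [Finset.sum_eq_single_of_mem n (Finset.mem_Icc.mpr ⟨hn1, le_refl n⟩)]
      · rw [hτval n (Finset.mem_Icc.mpr ⟨hn1, le_refl n⟩), if_pos rfl]
      · intro i hi hne
        rw [hτval i hi, if_neg hne]
    have hρδ : ρ * δ ≤ δ := by nlinarith
    rcases le_or_gt θ 0 with hθ | hθ
    · linarith
    · nlinarith
  · -- J = 2 : τ i = ρ q i for i < n, τ n = δ
    have hτlt : ∀ i ∈ Finset.Icc 1 (n-1), τ i = ρ * q i := by
      intro i hi
      obtain ⟨hi', hne⟩ := Icc_pred_mem hi hn1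
      rw [hτdef]
      unfold tauOf
      rw [show (2:ℕ) - 1 = 1 from rfl, (Ginst_ne_n hne).1, (Ginst_ne_n hne).2.1]
      ring
    have hτn : τ n = δ := by
      rw [hτdef]
      unfold tauOf
      rw [show (2:ℕ) - 1 = 1 from rfl, Ginst_at_n.1, Ginst_at_n.2.1]
      ring
    have heq : Finset.Icc 1 n = insert n (Finset.Icc 1 (n-1)) := by
      ext x; simp only [Finset.mem_Icc, Finset.mem_insert]; omega
    have hnm : n ∉ Finset.Icc 1 (n-1) := by simp only [Finset.mem_Icc]; omega
    have hEM : SB τ (Finset.Icc 1 n) (fmin k) ≤ k * α + δ := by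
      rw [heq, EM_insert _ _ hnm, hτn]
      have h1 : SB τ (Finset.Icc 1 (n-1)) (fmin k) ≤ SB q (Finset.Icc 1 (n-1)) (fmin k) := by
        apply SB_mono_p (fmin_mono k) hτ' hqb
        intro i hi
        rw [hτlt i hi]
        have := hqb i hi
        nlinarith
      have h2 := SB_find_mem (k := k) hτ (le_refl n)
      nlinarith [hαk]
    rcases le_or_gt θ 0 with hθ | hθ
    · linarith
    · nlinarith
  · -- J = 3 : τ i ≥ q i for i < n
    have hτge : ∀ i ∈ Finset.Icc 1 (n-1), q i ≤ τ i := by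
      intro i hi
      obtain ⟨hi', hne⟩ := Icc_pred_mem hi hn1
      rw [hτdef]
      unfold tauOf
      rw [show (3:ℕ) - 1 = 2 from rfl, (Ginst_ne_n hne).2.1, (Ginst_ne_n hne).2.2]
      have := hqb i hi
      nlinarith
    have hfind : SB τ (Finset.Icc 1 (n-1)) (find k) ≤ α := by
      rw [hα]
      exact SB_anti_p (find_anti k) hqb hτ' hτge
    have : θ * δ ≤ δ * α :=
      le_trans hB1 (mul_le_mul_of_nonneg_left hfind (le_of_lt hδ0))
    nlinarith

lemma innerLP_le_n {k n m : ℕ} {G : ℕ → ℕ → ℝ} {J : ℕ} {ρ : ℝ} {Q : ℕ → ℝ}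
    (hk : 1 ≤ k) (hm : 1 ≤ m) (hG : IsTypeDist n m G)
    (hτ : ∀ i ∈ Finset.Icc 1 n, 0 ≤ tauOf G J ρ i ∧ tauOf G J ρ i ≤ 1)
    (hQm : Q m = k) : innerLP_OST k n m G J ρ Q ≤ (n:ℝ) := by
  apply Real.sSup_le _ (by positivity)
  exact innerLP_bddAbove hk hm hG hτ hQm

lemma master {k n : ℕ} (hk : 1 ≤ k) (hkn : k < n)
    (Qf : ℕ → (ℕ → ℕ → ℝ) → ℕ → ℝ)
    (hQk : ∀ m G, 1 ≤ m → IsTypeDist n m G → ∀ j ∈ Finset.Icc 1 m, Qf m G j ≤ k)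
    (hQsum : ∀ m G, 1 ≤ m → IsTypeDist n m G →
      ∀ j ∈ Finset.Icc 1 m, Qf m G j ≤ ∑ i ∈ Finset.Icc 1 n, G i j)
    (hQm : ∀ m G, 1 ≤ m → IsTypeDist n m G → Qf m G m = k)
    (hQinst : ∀ (q : ℕ → ℝ) (δ : ℝ), (∀ i ∈ Finset.Icc 1 (n-1), q i ∈ Set.Icc (0:ℝ) 1) →
      0 < δ → δ ≤ 1 → Qf 3 (Ginst n q δ) 1 = δ) :
    sInf {v : ℝ | ∃ m, 1 ≤ m ∧ ∃ G, IsTypeDist n m G ∧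
        v = sSup {w : ℝ | ∃ J ∈ Finset.Icc 1 m, ∃ ρ ∈ Set.Ioc (0:ℝ) 1,
          w = innerLP_OST k n m G J ρ (Qf m G)}}
      = sInf {α : ℝ | ∃ q : ℕ → ℝ, (∀ i ∈ Finset.Icc 1 (n-1), q i ∈ Set.Icc (0:ℝ) 1) ∧
          α = probLt q (n-1) k ∧ α = eMinBer q (n-1) k / k} := by
  have hn1 : 1 ≤ n := by omega
  have hkR : (1:ℝ) ≤ k := by exact_mod_cast hk
  have hkR0 : (0:ℝ) < k := by linarith
  set RHS := {α : ℝ | ∃ q : ℕ → ℝ, (∀ i ∈ Finset.Icc 1 (n-1), q i ∈ Set.Icc (0:ℝ) 1) ∧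
      α = probLt q (n-1) k ∧ α = eMinBer q (n-1) k / k} with hRHSdef
  set LHS := {v : ℝ | ∃ m, 1 ≤ m ∧ ∃ G, IsTypeDist n m G ∧
      v = sSup {w : ℝ | ∃ J ∈ Finset.Icc 1 m, ∃ ρ ∈ Set.Ioc (0:ℝ) 1,
        w = innerLP_OST k n m G J ρ (Qf m G)}} with hLHSdef
  -- basic facts about RHS
  have hRHS0 : ∀ α ∈ RHS, (0:ℝ) ≤ α := by
    rintro α ⟨q, hq, hα, -⟩
    rw [hα, probLt_eq_SB]
    exact SB_nonneg (fun i hi => ⟨(hq i hi).1, (hq i hi).2⟩) (find_nonneg k)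
  have hRHSbdd : BddBelow RHS := ⟨0, fun α hα => hRHS0 α hα⟩
  -- crossing point gives an element of RHS
  have hcross_mem : ∀ (m : ℕ) (G : ℕ → ℕ → ℝ), 1 ≤ m → IsTypeDist n m G →
      ∀ J ∈ Finset.Icc 1 m, ∀ ρ ∈ Set.Ioc (0:ℝ) 1,
      SB (tauOf G J ρ) (Finset.Icc 1 (n-1)) (fmin k)
        = k * SB (tauOf G J ρ) (Finset.Icc 1 (n-1)) (find k) →
      SB (tauOf G J ρ) (Finset.Icc 1 (n-1)) (find k) ∈ RHS := by
    intro m G hm hG J hJ ρ hρ hcross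
    refine ⟨tauOf G J ρ, ?_, ?_, ?_⟩
    · intro i hi
      simp only [Finset.mem_Icc] at hi
      have := tau_bounds hG hJ hρ i (Finset.mem_Icc.mpr ⟨hi.1, by omega⟩)
      exact ⟨this.1, this.2⟩
    · rw [probLt_eq_SB]
    · rw [eMinBer_eq_SB, hcross]
      field_simp
  have hRHSne : RHS.Nonempty := by
    obtain ⟨J, hJ, ρ, hρ, hcross⟩ := exists_crossing hk hkn (le_refl 1) (Gtriv_typedist n)
    exact ⟨_, hcross_mem 1 Gtriv (le_refl 1) (Gtriv_typedist n) J hJ ρ hρ hcross⟩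
  -- inner sup sets are bounded above by n and contain a nonnegative element
  have hWfacts : ∀ (m : ℕ) (G : ℕ → ℕ → ℝ), 1 ≤ m → IsTypeDist n m G →
      (∀ w ∈ {w : ℝ | ∃ J ∈ Finset.Icc 1 m, ∃ ρ ∈ Set.Ioc (0:ℝ) 1,
        w = innerLP_OST k n m G J ρ (Qf m G)}, w ≤ (n:ℝ)) ∧
      (0:ℝ) ≤ sSup {w : ℝ | ∃ J ∈ Finset.Icc 1 m, ∃ ρ ∈ Set.Ioc (0:ℝ) 1,
        w = innerLP_OST k n m G J ρ (Qf m G)} := by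
    intro m G hm hG
    have hbdd : ∀ w ∈ {w : ℝ | ∃ J ∈ Finset.Icc 1 m, ∃ ρ ∈ Set.Ioc (0:ℝ) 1,
        w = innerLP_OST k n m G J ρ (Qf m G)}, w ≤ (n:ℝ) := by
      rintro w ⟨J, hJ, ρ, hρ, rfl⟩
      exact innerLP_le_n hk hm hG (tau_bounds hG hJ hρ) (hQm m G hm hG)
    refine ⟨hbdd, ?_⟩
    have h1Icc : (1:ℕ) ∈ Finset.Icc 1 m := Finset.mem_Icc.mpr ⟨le_refl 1, hm⟩
    have h1Ioc : (1:ℝ) ∈ Set.Ioc (0:ℝ) 1 := ⟨one_pos, le_refl 1⟩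
    have hmem : innerLP_OST k n m G 1 1 (Qf m G) ∈ {w : ℝ | ∃ J ∈ Finset.Icc 1 m,
        ∃ ρ ∈ Set.Ioc (0:ℝ) 1, w = innerLP_OST k n m G J ρ (Qf m G)} :=
      ⟨1, h1Icc, 1, h1Ioc, rfl⟩
    calc (0:ℝ) ≤ innerLP_OST k n m G 1 1 (Qf m G) :=
          innerLP_nonneg hk hm hG (tau_bounds hG h1Icc h1Ioc) (hQm m G hm hG)
      _ ≤ _ := le_csSup ⟨(n:ℝ), fun w hw => hbdd w hw⟩ hmem
  have hLHS0 : ∀ v ∈ LHS, (0:ℝ) ≤ v := by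
    rintro v ⟨m, hm, G, hG, rfl⟩
    exact (hWfacts m G hm hG).2
  have hLHSne : LHS.Nonempty :=
    ⟨_, 1, le_refl 1, Gtriv, Gtriv_typedist n, rfl⟩
  apply le_antisymm
  · -- LHS ≤ RHS via the hard instance
    have key : ∀ ε : ℝ, 0 < ε → sInf LHS ≤ sInf RHS + ε := by
      intro ε hε
      obtain ⟨α, hαmem, hαlt⟩ := exists_lt_of_csInf_lt hRHSne
        (lt_add_of_pos_right (sInf RHS) (by linarith : (0:ℝ) < ε/2))
      obtain ⟨q, hq, hα1, hα2⟩ := hαmem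
      set δ := min (ε/2) 1 with hδdef
      have hδ0 : 0 < δ := lt_min (by linarith) one_pos
      have hδ1 : δ ≤ 1 := min_le_right _ _
      have hδε : δ ≤ ε/2 := min_le_left _ _
      have hG := Ginst_typedist hn1 hq hδ0 hδ1
      have hα0 : 0 ≤ α := hRHS0 α ⟨q, hq, hα1, hα2⟩
      have hα1' : α = SB q (Finset.Icc 1 (n-1)) (find k) := by
        rw [hα1, probLt_eq_SB]
      have hα2' : SB q (Finset.Icc 1 (n-1)) (fmin k) = k * α := by
        rw [hα2, eMinBer_eq_SB]
        field_simp
      have hQ1 : Qf 3 (Ginst n q δ) 1 = δ := hQinst q δ hq hδ0 hδ1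
      have hQ3 : Qf 3 (Ginst n q δ) 3 = k := hQm 3 (Ginst n q δ) (by norm_num) hG
      have hvle : sSup {w : ℝ | ∃ J ∈ Finset.Icc 1 3, ∃ ρ ∈ Set.Ioc (0:ℝ) 1,
          w = innerLP_OST k n 3 (Ginst n q δ) J ρ (Qf 3 (Ginst n q δ))} ≤ α + δ := by
        apply Real.sSup_le _ (by linarith)
        rintro w ⟨J, hJ, ρ, hρ, rfl⟩
        apply innerLP_le_bound hk (tau_bounds hG hJ hρ) (by linarith)
        intro θ hθcons
        exact inst_theta_bound hk hkn hq hδ0 hδ1 hα1' hα2' hJ hρ hQ1 hQ3 hθcons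
      have hmem : sSup {w : ℝ | ∃ J ∈ Finset.Icc 1 3, ∃ ρ ∈ Set.Ioc (0:ℝ) 1,
          w = innerLP_OST k n 3 (Ginst n q δ) J ρ (Qf 3 (Ginst n q δ))} ∈ LHS :=
        ⟨3, by norm_num, Ginst n q δ, hG, rfl⟩
      calc sInf LHS ≤ _ := csInf_le ⟨0, fun v hv => hLHS0 v hv⟩ hmem
        _ ≤ α + δ := hvle
        _ ≤ sInf RHS + ε := by linarith
    by_contra hcon
    push_neg at hcon
    have := key ((sInf LHS - sInf RHS)/2) (by linarith)
    linarith
  · -- RHS ≤ LHS via the crossing point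
    apply le_csInf hLHSne
    rintro v ⟨m, hm, G, hG, rfl⟩
    obtain ⟨J, hJ, ρ, hρ, hcross⟩ := exists_crossing hk hkn hm hG
    have hτ := tau_bounds hG hJ hρ
    have hθ₀RHS := hcross_mem m G hm hG J hJ ρ hρ hcross
    have h1 : sInf RHS ≤ SB (tauOf G J ρ) (Finset.Icc 1 (n-1)) (find k) :=
      csInf_le hRHSbdd hθ₀RHS
    have h2 : SB (tauOf G J ρ) (Finset.Icc 1 (n-1)) (find k)
        ≤ innerLP_OST k n m G J ρ (Qf m G) :=
      innerLP_ge hk hm hG hτ (hQm m G hm hG)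
        (lb_constraints hk hkn hG hJ hρ (hQk m G hm hG) (hQsum m G hm hG) hcross)
    have h3 : innerLP_OST k n m G J ρ (Qf m G) ≤ sSup {w : ℝ | ∃ J ∈ Finset.Icc 1 m,
        ∃ ρ ∈ Set.Ioc (0:ℝ) 1, w = innerLP_OST k n m G J ρ (Qf m G)} :=
      le_csSup ⟨(n:ℝ), fun w hw => (hWfacts m G hm hG).1 w hw⟩ ⟨J, hJ, ρ, hρ, rfl⟩
    linarith


/-- Corollary `bernOpt`: the worst-case OST guarantees relative to the prophet
and to the ex-ante relaxation both equal the value of the Bernoulli optimization problem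
`inf{α : ∃ q ∈ [0,1]^{n-1}, α = P(Σ Ber(q_i) < k) = E[min{Σ Ber(q_i), k}]/k}`. -/
theorem stmt10 (k n : ℕ) (hk : 1 ≤ k) (hkn : k < n) :
    (sInf {v : ℝ | ∃ m, 1 ≤ m ∧ ∃ G, IsTypeDist n m G ∧
        v = sSup {w : ℝ | ∃ J ∈ Finset.Icc 1 m, ∃ ρ ∈ Set.Ioc (0:ℝ) 1,
          w = innerLP_OST k n m G J ρ (QProph k n G)}}
      = sInf {α : ℝ | ∃ q : ℕ → ℝ, (∀ i ∈ Finset.Icc 1 (n-1), q i ∈ Set.Icc (0:ℝ) 1) ∧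
          α = probLt q (n-1) k ∧ α = eMinBer q (n-1) k / k}) ∧
    (sInf {v : ℝ | ∃ m, 1 ≤ m ∧ ∃ G, IsTypeDist n m G ∧
        v = sSup {w : ℝ | ∃ J ∈ Finset.Icc 1 m, ∃ ρ ∈ Set.Ioc (0:ℝ) 1,
          w = innerLP_OST k n m G J ρ (QExAnte k n G)}}
      = sInf {α : ℝ | ∃ q : ℕ → ℝ, (∀ i ∈ Finset.Icc 1 (n-1), q i ∈ Set.Icc (0:ℝ) 1) ∧
          α = probLt q (n-1) k ∧ α = eMinBer q (n-1) k / k}) := by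
  have hn1 : 1 ≤ n := by omega
  constructor
  · exact master hk hkn (fun m G => QProph k n G)
      (fun m G hm hG j hj => QProph_le_k hG (Finset.mem_Icc.mp hj).2)
      (fun m G hm hG j hj => QProph_le_sum hG (Finset.mem_Icc.mp hj).2)
      (fun m G hm hG => QProph_m (le_of_lt hkn) hG)
      (fun q δ hq hδ0 hδ1 => QProph_inst1 hk hn1 q δ)
  · exact master hk hkn (fun m G => QExAnte k n G)
      (fun m G hm hG j hj => QExAnte_le_k G j)
      (fun m G hm hG j hj => QExAnte_le_sum G j)
      (fun m G hm hG => QExAnte_m (le_of_lt hkn) hG)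
      (fun q δ hq hδ0 hδ1 => QExAnte_inst1 hk hn1 q hδ0 hδ1)
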